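/- arXiv:2206.08240 — 6 statements merged into one kernel-verified Lean document; each statement's English description precedes it below -/
import Mathlib

section
/- Let H be a real Hilbert space, A : H → H monotone and L-Lipschitz, B : H → 2^H maximal monotone, and z ∈ (A + B)⁻¹(0). Let μ > 0 and define v_{n+1} = (I + μB)⁻¹(v_n - μ(2A v_n - A v_{n-1})). Then for all n, (1/2)‖z - v_{n+1}‖² ≤ (1/2)‖z - v_n‖² + μ⟨A v_n - A v_{n-1}, z - v_n⟩ + μ⟨A v_n - A v_{n-1}, v_n - v_{n+1}⟩ + μ⟨A v_n - A v_{n+1}, z - v_{n+1}⟩ - (1/2)‖v_{n+1} - v_n‖². -/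
/-- Lemma 4.1 specialized to a Hilbert space (`g = ½‖·‖²`). -/
theorem lemma41_hilbert
    {H : Type*} [NormedAddCommGroup H] [InnerProductSpace ℝ H]
    (A : H → H) (B : H → Set H)
    (hA : ∀ x y : H, 0 ≤ (inner ℝ (A x - A y) (x - y) : ℝ))
    (hBmono : ∀ x y u w : H, u ∈ B x → w ∈ B y → 0 ≤ (inner ℝ (u - w) (x - y) : ℝ))
    (hBmax : ∀ x u : H, (∀ y w : H, w ∈ B y → 0 ≤ (inner ℝ (u - w) (x - y) : ℝ)) → u ∈ B x)
    (μ : ℝ) (hμ : 0 < μ) (z : H) (hz : -A z ∈ B z)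
    (v : ℕ → H)
    (hres : ∀ n, 1 ≤ n →
      (1 / μ) • (v n - μ • ((2 : ℝ) • A (v n) - A (v (n - 1))) - v (n + 1)) ∈ B (v (n + 1))) :
    ∀ n, 1 ≤ n →
      (1 / 2) * ‖z - v (n + 1)‖ ^ 2 ≤
        (1 / 2) * ‖z - v n‖ ^ 2
          + μ * (inner ℝ (A (v n) - A (v (n - 1))) (z - v n) : ℝ)
          + μ * (inner ℝ (A (v n) - A (v (n - 1))) (v n - v (n + 1)) : ℝ)
          + μ * (inner ℝ (A (v n) - A (v (n + 1))) (z - v (n + 1)) : ℝ)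
          - (1 / 2) * ‖v (n + 1) - v n‖ ^ 2 := by
  intro n hn
  have hμ' : μ ≠ 0 := hμ.ne'
  have h1 := hBmono (v (n + 1)) z _ _ (hres n hn) hz
  have h2 := hA (v (n + 1)) z
  have h1m : (0:ℝ) ≤ μ * inner ℝ ((1 / μ) • (v n - μ • ((2 : ℝ) • A (v n) - A (v (n - 1))) - v (n + 1)) - -A z) (v (n + 1) - z) :=
    mul_nonneg hμ.le h1
  have h2m : (0:ℝ) ≤ μ * inner ℝ (A (v (n + 1)) - A z) (v (n + 1) - z) :=
    mul_nonneg hμ.le h2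
  simp only [← real_inner_self_eq_norm_sq, inner_sub_left, inner_sub_right,
    inner_add_left, inner_add_right, inner_neg_left, inner_neg_right,
    real_inner_smul_left, real_inner_smul_right, inner_smul_left, inner_smul_right,
    real_inner_comm (v n), conj_trivial] at h1m h2m ⊢
  field_simp at h1m
  ring_nf at h1m h2m ⊢
  have hc : (inner ℝ z (v (n+1)) : ℝ) = inner ℝ (v (n+1)) z := real_inner_comm _ _
  ring_nf at hc
  linarith [h1m, h2m, hc]
end

section
/- Under the hypotheses of Lemma 4.1 in a Hilbert space with μ ∈ [δ, (1-2δ)/(2L)], δ ∈ (0,1/2), the sequence s_n := ½‖z - v_n‖² + μ⟨A v_n - A v_{n-1}, z - v_n⟩ + ¼‖v_n - v_{n-1}‖² satisfies s_{n+1} ≤ s_n - δ·½‖v_{n+1} - v_n‖² for all n ≥ 1; consequently ‖v_{n+1} - v_n‖ → 0 and (v_n) is bounded. -/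
open Filter

section AuxFRB
variable {H : Type*} [NormedAddCommGroup H] [InnerProductSpace ℝ H]

lemma key_inner_id_frb (x w z : H) :
    (inner ℝ (x - w) (w - z) : ℝ)
      = 1/2*‖x-z‖^2 - 1/2*‖w-z‖^2 - 1/2*‖w-x‖^2 := by
  simp only [norm_sub_sq_real, inner_sub_left, inner_sub_right,
    real_inner_self_eq_norm_sq, real_inner_comm x z, real_inner_comm x w, real_inner_comm w z]
  ring

lemma step_estimate_frb (A : H → H) (B : H → Set H) (L δ μ : ℝ)
    (hδ0 : 0 < δ) (hL : 0 < L)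
    (hμl : δ ≤ μ) (hμu : μ ≤ (1 - 2 * δ) / (2 * L))
    (hA : ∀ x y : H, 0 ≤ (inner ℝ (A x - A y) (x - y) : ℝ))
    (hlip : ∀ x y : H, ‖A x - A y‖ ≤ L * ‖x - y‖)
    (hBmono : ∀ x y u w : H, u ∈ B x → w ∈ B y → 0 ≤ (inner ℝ (u - w) (x - y) : ℝ))
    (z : H) (hz : -A z ∈ B z) (x y w : H)
    (hu : (1 / μ) • (x - μ • ((2 : ℝ) • A x - A y) - w) ∈ B w) :
    (1/2) * ‖z - w‖^2 + μ * (inner ℝ (A w - A x) (z - w) : ℝ) + (1/4) * ‖w - x‖^2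
      ≤ (1/2) * ‖z - x‖^2 + μ * (inner ℝ (A x - A y) (z - x) : ℝ) + (1/4) * ‖x - y‖^2
        - δ * ((1/2) * ‖w - x‖^2) := by
  have hμ0 : 0 < μ := lt_of_lt_of_le hδ0 hμl
  have hμL : μ * L ≤ (1 - 2*δ) / 2 := by
    have h := mul_le_mul_of_nonneg_right hμu hL.le
    have e : (1 - 2*δ) / (2*L) * L = (1 - 2*δ)/2 := by field_simp
    linarith [e ▸ h]
  have hm : 0 ≤ (inner ℝ ((1 / μ) • (x - μ • ((2 : ℝ) • A x - A y) - w) - (-A z)) (w - z) : ℝ) :=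
    hBmono w z _ _ hu hz
  have hm' : 0 ≤ μ * (inner ℝ ((1 / μ) • (x - μ • ((2 : ℝ) • A x - A y) - w) - (-A z)) (w - z) : ℝ) :=
    mul_nonneg hμ0.le hm
  have e1 : μ * (inner ℝ ((1 / μ) • (x - μ • ((2 : ℝ) • A x - A y) - w) - (-A z)) (w - z) : ℝ)
      = (inner ℝ (x - w) (w - z) : ℝ)
        + μ * ((inner ℝ (A z) (w - z) : ℝ) - 2 * (inner ℝ (A x) (w - z) : ℝ)
            + (inner ℝ (A y) (w - z) : ℝ)) := by
    simp only [inner_sub_left, inner_add_left, real_inner_smul_left, sub_neg_eq_add]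
    field_simp
    ring
  have fact1 : 0 ≤ (inner ℝ (x - w) (w - z) : ℝ)
        + μ * ((inner ℝ (A z) (w - z) : ℝ) - 2 * (inner ℝ (A x) (w - z) : ℝ)
            + (inner ℝ (A y) (w - z) : ℝ)) := e1 ▸ hm'
  have fact2 : 0 ≤ μ * (inner ℝ (A w - A z) (w - z) : ℝ) :=
    mul_nonneg hμ0.le (hA w z)
  have e2 : (inner ℝ (A z) (w - z) : ℝ) - 2 * (inner ℝ (A x) (w - z) : ℝ)
        + (inner ℝ (A y) (w - z) : ℝ) + (inner ℝ (A w - A z) (w - z) : ℝ)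
      = -(inner ℝ (A w - A x) (z - w) : ℝ) + (inner ℝ (A x - A y) (z - x) : ℝ)
        + (inner ℝ (A x - A y) (x - w) : ℝ) := by
    simp only [inner_sub_left, inner_sub_right]
    ring
  have keyfact : 0 ≤ (1/2*‖x-z‖^2 - 1/2*‖w-z‖^2 - 1/2*‖w-x‖^2)
      + μ * (-(inner ℝ (A w - A x) (z - w) : ℝ) + (inner ℝ (A x - A y) (z - x) : ℝ)
        + (inner ℝ (A x - A y) (x - w) : ℝ)) := by
    have h12 := add_nonneg fact1 fact2
    have e3 : (inner ℝ (x - w) (w - z) : ℝ)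
        + μ * ((inner ℝ (A z) (w - z) : ℝ) - 2 * (inner ℝ (A x) (w - z) : ℝ)
            + (inner ℝ (A y) (w - z) : ℝ)) + μ * (inner ℝ (A w - A z) (w - z) : ℝ)
        = (inner ℝ (x - w) (w - z) : ℝ)
          + μ * (-(inner ℝ (A w - A x) (z - w) : ℝ) + (inner ℝ (A x - A y) (z - x) : ℝ)
            + (inner ℝ (A x - A y) (x - w) : ℝ)) := by
      linear_combination μ * e2
    rw [e3, key_inner_id_frb x w z] at h12
    linarith
  have hR : (inner ℝ (A x - A y) (x - w) : ℝ) ≤ L * ‖x - y‖ * ‖x - w‖ := by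
    calc (inner ℝ (A x - A y) (x - w) : ℝ) ≤ ‖A x - A y‖ * ‖x - w‖ := real_inner_le_norm _ _
    _ ≤ L * ‖x - y‖ * ‖x - w‖ := mul_le_mul_of_nonneg_right (hlip x y) (norm_nonneg _)
  have hμR : μ * (inner ℝ (A x - A y) (x - w) : ℝ) ≤ μ * (L * ‖x - y‖ * ‖x - w‖) :=
    mul_le_mul_of_nonneg_left hR hμ0.le
  have hn1 : ‖z - w‖ = ‖w - z‖ := norm_sub_rev _ _
  have hn2 : ‖z - x‖ = ‖x - z‖ := norm_sub_rev _ _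
  have hn3 : ‖x - w‖ = ‖w - x‖ := norm_sub_rev _ _
  rw [hn1, hn2]
  rw [hn3] at hμR
  nlinarith [keyfact, hμR, mul_nonneg (mul_nonneg hμ0.le hL.le) (sq_nonneg (‖x - y‖ - ‖w - x‖)),
    sq_nonneg (‖x - y‖), sq_nonneg (‖w - x‖), hμL,
    mul_le_mul_of_nonneg_right hμL (by positivity : (0:ℝ) ≤ ‖x - y‖^2 + ‖w - x‖^2)]

end AuxFRB

/-- The key estimate (4.8*) of Theorem 4.2 together with its consequences:
`‖v (n+1) - v n‖ → 0` and boundedness of `(v n)`. -/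
theorem key_estimate_and_consequences
    {H : Type*} [NormedAddCommGroup H] [InnerProductSpace ℝ H]
    (A : H → H) (B : H → Set H) (L δ μ : ℝ)
    (hδ0 : 0 < δ) (hδ1 : δ < 1 / 2) (hL : 0 < L)
    (hμl : δ ≤ μ) (hμu : μ ≤ (1 - 2 * δ) / (2 * L))
    (hA : ∀ x y : H, 0 ≤ (inner ℝ (A x - A y) (x - y) : ℝ))
    (hlip : ∀ x y : H, ‖A x - A y‖ ≤ L * ‖x - y‖)
    (hBmono : ∀ x y u w : H, u ∈ B x → w ∈ B y → 0 ≤ (inner ℝ (u - w) (x - y) : ℝ))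
    (hBmax : ∀ x u : H, (∀ y w : H, w ∈ B y → 0 ≤ (inner ℝ (u - w) (x - y) : ℝ)) → u ∈ B x)
    (z : H) (hz : -A z ∈ B z)
    (v : ℕ → H)
    (hres : ∀ n, 1 ≤ n →
      (1 / μ) • (v n - μ • ((2 : ℝ) • A (v n) - A (v (n - 1))) - v (n + 1)) ∈ B (v (n + 1)))
    (s : ℕ → ℝ)
    (hs : ∀ n, s n = (1 / 2) * ‖z - v n‖ ^ 2
      + μ * (inner ℝ (A (v n) - A (v (n - 1))) (z - v n) : ℝ)
      + (1 / 4) * ‖v n - v (n - 1)‖ ^ 2) :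
    (∀ n, 1 ≤ n → s (n + 1) ≤ s n - δ * ((1 / 2) * ‖v (n + 1) - v n‖ ^ 2)) ∧
      Tendsto (fun n => ‖v (n + 1) - v n‖) atTop (nhds 0) ∧
      ∃ M : ℝ, ∀ n, ‖v n‖ ≤ M := by
  have hμ0 : 0 < μ := lt_of_lt_of_le hδ0 hμl
  have hμL : μ * L ≤ (1 - 2*δ) / 2 := by
    have h := mul_le_mul_of_nonneg_right hμu hL.le
    have e : (1 - 2*δ) / (2*L) * L = (1 - 2*δ)/2 := by field_simp
    linarith [e ▸ h]
  -- the key per-step estimate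
  have hstep : ∀ n, 1 ≤ n → s (n + 1) ≤ s n - δ * ((1 / 2) * ‖v (n + 1) - v n‖ ^ 2) := by
    intro n hn
    have h := step_estimate_frb A B L δ μ hδ0 hL hμl hμu hA hlip hBmono z hz
      (v n) (v (n - 1)) (v (n + 1)) (hres n hn)
    rw [hs (n + 1), hs n]
    simpa using h
  -- lower bound: s n ≥ (1/4) ‖z - v n‖²
  have hlow : ∀ n, (1 / 4) * ‖z - v n‖ ^ 2 ≤ s n := by
    intro n
    rw [hs n]
    set a := ‖z - v n‖ with ha
    set b := ‖v n - v (n - 1)‖ with hb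
    have hI : -(L * b * a) ≤ (inner ℝ (A (v n) - A (v (n - 1))) (z - v n) : ℝ) := by
      have h1 : |(inner ℝ (A (v n) - A (v (n - 1))) (z - v n) : ℝ)|
          ≤ ‖A (v n) - A (v (n - 1))‖ * ‖z - v n‖ := abs_real_inner_le_norm _ _
      have h2 : ‖A (v n) - A (v (n - 1))‖ * ‖z - v n‖ ≤ L * b * a :=
        mul_le_mul_of_nonneg_right (hlip _ _) (norm_nonneg _)
      have := neg_abs_le (inner ℝ (A (v n) - A (v (n - 1))) (z - v n) : ℝ)
      linarith
    have hμI : -(μ * (L * b * a)) ≤ μ * (inner ℝ (A (v n) - A (v (n - 1))) (z - v n) : ℝ) := by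
      nlinarith [mul_le_mul_of_nonneg_left hI hμ0.le]
    have ha0 : 0 ≤ a := norm_nonneg _
    have hb0 : 0 ≤ b := norm_nonneg _
    nlinarith [sq_nonneg (a - b), mul_nonneg ha0 hb0,
      mul_nonneg (mul_nonneg ha0 hb0) (by linarith : (0:ℝ) ≤ 1/2 - μ * L)]
  have hs0 : ∀ n, 0 ≤ s n := fun n => le_trans (by positivity) (hlow n)
  refine ⟨hstep, ?_, ?_⟩
  · -- Tendsto
    set g : ℕ → ℝ := fun n => δ / 2 * ‖v (n + 2) - v (n + 1)‖ ^ 2 with hg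
    have hgle : ∀ n, g n ≤ s (n + 1) - s (n + 2) := by
      intro n
      have := hstep (n + 1) (by omega)
      simp only [hg]
      linarith
    have hgnn : ∀ n, 0 ≤ g n := fun n => by positivity
    have hsum : Summable g := by
      apply summable_of_sum_range_le hgnn
      intro n
      calc ∑ i ∈ Finset.range n, g i
          ≤ ∑ i ∈ Finset.range n, (s (i + 1) - s (i + 1 + 1)) :=
            Finset.sum_le_sum fun i _ => hgle i
        _ = s (0 + 1) - s (n + 1) := Finset.sum_range_sub' (fun i => s (i + 1)) n
        _ ≤ s 1 := by have := hs0 (n + 1); simp; linarith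
    have ht0 : Tendsto g atTop (nhds 0) := hsum.tendsto_atTop_zero
    have ht1 : Tendsto (fun n => ‖v (n + 2) - v (n + 1)‖ ^ 2) atTop (nhds 0) := by
      have h := ht0.const_mul (2 / δ)
      have e : (fun n => (2 / δ) * g n) = fun n => ‖v (n + 2) - v (n + 1)‖ ^ 2 := by
        funext n
        simp only [hg]
        field_simp
      rw [mul_zero] at h
      rwa [e] at h
    have ht2 : Tendsto (fun n => ‖v (n + 2) - v (n + 1)‖) atTop (nhds 0) := by
      have h := (Real.continuous_sqrt.tendsto 0).comp ht1
      simp only [Function.comp_def, Real.sqrt_zero] at h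
      have e : (fun n => Real.sqrt (‖v (n + 2) - v (n + 1)‖ ^ 2))
          = fun n => ‖v (n + 2) - v (n + 1)‖ := by
        funext n; exact Real.sqrt_sq (norm_nonneg _)
      rwa [e] at h
    have ht3 : Tendsto (fun n => ‖v (n + 1 + 1) - v (n + 1)‖) atTop (nhds 0) := ht2
    exact (tendsto_add_atTop_iff_nat (f := fun n => ‖v (n + 1) - v n‖) (l := nhds 0) 1).mp ht3
  · -- boundedness
    have hmono : ∀ n, 1 ≤ n → s n ≤ s 1 := by
      intro n hn
      induction n with
      | zero => omega
      | succ m ih =>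
        rcases Nat.lt_or_ge m 1 with h | h
        · interval_cases m
          exact le_rfl
        · have hst := hstep m h
          have hsq : 0 ≤ δ * ((1 / 2) * ‖v (m + 1) - v m‖ ^ 2) := by positivity
          linarith [ih h]
    refine ⟨max (‖v 0‖) (Real.sqrt (4 * s 1) + ‖z‖), fun n => ?_⟩
    rcases Nat.eq_zero_or_pos n with h0 | h1
    · subst h0; exact le_max_left _ _
    · refine le_trans ?_ (le_max_right _ _)
      have hb : ‖z - v n‖ ^ 2 ≤ 4 * s 1 := by
        have := hlow n
        have := hmono n h1
        linarith
      have hzn : ‖z - v n‖ ≤ Real.sqrt (4 * s 1) := by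
        rw [show ‖z - v n‖ = Real.sqrt (‖z - v n‖ ^ 2) from (Real.sqrt_sq (norm_nonneg _)).symm]
        exact Real.sqrt_le_sqrt hb
      calc ‖v n‖ = ‖(v n - z) + z‖ := by rw [sub_add_cancel]
        _ ≤ ‖v n - z‖ + ‖z‖ := norm_add_le _ _
        _ = ‖z - v n‖ + ‖z‖ := by rw [norm_sub_rev]
        _ ≤ Real.sqrt (4 * s 1) + ‖z‖ := by linarith
end

section
/- Let H be a real Hilbert space, A : H → H monotone and L-Lipschitz continuous, B : H → 2^H maximal monotone with (A+B)⁻¹(0) ≠ ∅, and μ ∈ [δ, (1-2δ)/(2L)] for some δ ∈ (0, 1/2). Then the sequence v_{n+1} = (I + μB)⁻¹(v_n - μ(2Av_n - Av_{n-1})), v₀, v₁ ∈ H arbitrary, converges weakly to some u ∈ (A+B)⁻¹(0). -/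
open Filter
open TopologicalSpace

section aux

variable {H : Type*} [NormedAddCommGroup H] [InnerProductSpace ℝ H]

lemma key_alg (P Q R z aP aQ aR az : H) (μ L : ℝ) (hμ : 0 < μ) (hL : 0 < L)
    (h1 : 0 ≤ (inner ℝ ((Q - P) - μ • ((2:ℝ) • aQ - aR - az)) (P - z) : ℝ))
    (hmono : 0 ≤ (inner ℝ (aP - az) (P - z) : ℝ))
    (hlipQR : ‖aQ - aR‖ ≤ L * ‖Q - R‖) :
    ‖P - z‖^2 + 2*μ*(inner ℝ (aP - aQ) (z - P) : ℝ) + μ*L*‖P - Q‖^2 ≤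
      ‖Q - z‖^2 + 2*μ*(inner ℝ (aQ - aR) (z - Q) : ℝ) + μ*L*‖Q - R‖^2
        - (1-2*(μ*L))*‖P - Q‖^2 := by
  have e1 : (inner ℝ (Q - P) (P - z) : ℝ)
      = (‖Q - z‖^2 - ‖P - z‖^2 - ‖P - Q‖^2)/2 := by
    have h := @norm_add_sq_real H _ _ (P - z) (Q - P)
    have h2 : P - z + (Q - P) = Q - z := by abel
    rw [h2] at h
    have h3 : (inner ℝ (P - z) (Q - P) : ℝ) = inner ℝ (Q - P) (P - z) := real_inner_comm _ _
    have h4 : ‖Q - P‖ = ‖P - Q‖ := norm_sub_rev _ _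
    rw [h3, h4] at h
    linarith
  have e2 : (inner ℝ ((Q - P) - μ • ((2:ℝ) • aQ - aR - az)) (P - z) : ℝ)
      = (inner ℝ (Q - P) (P - z) : ℝ) - μ * (inner ℝ ((2:ℝ) • aQ - aR - az) (P - z) : ℝ) := by
    rw [inner_sub_left, real_inner_smul_left]
  have e3 : (inner ℝ ((2:ℝ) • aQ - aR - az) (P - z) : ℝ)
      = (inner ℝ (aP - az) (P - z) : ℝ) + (inner ℝ (aQ - aR) (P - z) : ℝ)
        + (inner ℝ (aQ - aP) (P - z) : ℝ) := by
    rw [← inner_add_left, ← inner_add_left]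
    congr 1
    rw [two_smul]
    abel
  have e4 : (inner ℝ (aQ - aR) (P - z) : ℝ)
      = (inner ℝ (aQ - aR) (P - Q) : ℝ) - (inner ℝ (aQ - aR) (z - Q) : ℝ) := by
    rw [← inner_sub_right]
    congr 1
    abel
  have e5 : (inner ℝ (aQ - aP) (P - z) : ℝ) = (inner ℝ (aP - aQ) (z - P) : ℝ) := by
    have h0 : aQ - aP = -(aP - aQ) := by abel
    have h2 : P - z = -(z - P) := by abel
    rw [h0, h2, inner_neg_neg]
  have e6 : -(L * ‖Q - R‖ * ‖P - Q‖) ≤ (inner ℝ (aQ - aR) (P - Q) : ℝ) := by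
    have h1' : |(inner ℝ (aQ - aR) (P - Q) : ℝ)| ≤ ‖aQ - aR‖ * ‖P - Q‖ :=
      abs_real_inner_le_norm _ _
    have h2 : ‖aQ - aR‖ * ‖P - Q‖ ≤ L * ‖Q - R‖ * ‖P - Q‖ :=
      mul_le_mul_of_nonneg_right hlipQR (norm_nonneg _)
    have := neg_abs_le (inner ℝ (aQ - aR) (P - Q) : ℝ)
    linarith
  rw [e2, e3, e4, e5, e1] at h1
  have f1 : 0 ≤ μ * (inner ℝ (aP - az) (P - z) : ℝ) := mul_nonneg hμ.le hmono
  have f2 : -(μ * (L * ‖Q - R‖ * ‖P - Q‖)) ≤ μ * (inner ℝ (aQ - aR) (P - Q) : ℝ) := by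
    have := mul_le_mul_of_nonneg_left e6 hμ.le
    linarith
  have f3 : 2 * (μ * (L * ‖Q - R‖ * ‖P - Q‖)) ≤ μ*L*‖Q - R‖^2 + μ*L*‖P - Q‖^2 := by
    nlinarith [sq_nonneg (‖Q - R‖ - ‖P - Q‖), mul_pos hμ hL]
  nlinarith [h1, f1, f2, f3]

end aux

lemma weak_seq_compact {H : Type*} [NormedAddCommGroup H] [InnerProductSpace ℝ H] [CompleteSpace H]
    (x : ℕ → H) (M : ℝ) (hb : ∀ n, ‖x n‖ ≤ M) :
    ∃ φ : ℕ → ℕ, StrictMono φ ∧ ∃ u : H,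
      ∀ y : H, Tendsto (fun k => (inner ℝ (x (φ k)) y : ℝ)) atTop (nhds (inner ℝ u y : ℝ)) := by
  have hM0 : 0 ≤ M := le_trans (norm_nonneg _) (hb 0)
  set D : Submodule ℝ H := (Submodule.span ℝ (Set.range x)).topologicalClosure with hD
  haveI : CompleteSpace D :=
    (Submodule.isClosed_topologicalClosure _).completeSpace_coe
  have hDsep : IsSeparable (D : Set H) := by
    rw [hD, Submodule.topologicalClosure_coe]
    exact (((Set.countable_range x).isSeparable).span).closure
  obtain ⟨c, hcct, hcsub⟩ := hDsep
  have hins : (insert (0:H) c).Countable := hcct.insert 0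
  obtain ⟨e, he⟩ := Set.Countable.exists_eq_range hins ⟨0, Set.mem_insert _ _⟩
  have hDe : (D : Set H) ⊆ closure (Set.range e) := by
    rw [← he]
    exact hcsub.trans (closure_mono (Set.subset_insert _ _))
  set F : ℕ → (ℕ → ℝ) := fun k j => (inner ℝ (x k) (e j) : ℝ) with hF
  have hFs : ∀ k, F k ∈ Set.pi Set.univ (fun j => Set.Icc (-(M*‖e j‖)) (M*‖e j‖)) := by
    intro k j _
    have h1 : |(inner ℝ (x k) (e j) : ℝ)| ≤ M * ‖e j‖ := by
      refine (abs_real_inner_le_norm _ _).trans ?_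
      exact mul_le_mul_of_nonneg_right (hb k) (norm_nonneg _)
    exact ⟨neg_le_of_abs_le h1, le_of_abs_le h1⟩
  obtain ⟨g, -, φ, hφ, hconv⟩ :=
    (isCompact_univ_pi (fun j => isCompact_Icc)).tendsto_subseq hFs
  have hconvj : ∀ j, Tendsto (fun k => F (φ k) j) atTop (nhds (g j)) :=
    fun j => (tendsto_pi_nhds.mp hconv) j
  have hxD : ∀ k, x k ∈ D :=
    fun k => Submodule.le_topologicalClosure _ (Submodule.subset_span ⟨k, rfl⟩)
  have key : ∀ y : H, CauchySeq (fun k => (inner ℝ (x (φ k)) y : ℝ)) := by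
    intro y
    set p : H := (D.orthogonalProjectionOnto y : H) with hp
    have hip : ∀ k, (inner ℝ (x k) y : ℝ) = inner ℝ (x k) p := by
      intro k
      have h0 : (inner ℝ (y - p) (x k) : ℝ) = 0 :=
        by rw [hp, ← Submodule.starProjection_apply]; exact
          Submodule.starProjection_inner_eq_zero y (x k) (hxD k)
      have h1 : (inner ℝ (x k) (y - p) : ℝ) = 0 := by rwa [real_inner_comm]
      rw [inner_sub_right] at h1
      linarith
    have hmain : CauchySeq (fun k => (inner ℝ (x (φ k)) p : ℝ)) := by
      rw [Metric.cauchySeq_iff']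
      intro ε hε
      have hpc : p ∈ closure (Set.range e) := hDe (Submodule.coe_mem _)
      have hεd : 0 < ε / (3 * (M + 1)) := by positivity
      obtain ⟨d, ⟨j, rfl⟩, hdc⟩ := Metric.mem_closure_iff.mp hpc _ hεd
      obtain ⟨N, hN⟩ := Metric.cauchySeq_iff'.mp (hconvj j).cauchySeq (ε/3) (by linarith)
      refine ⟨N, fun k hk => ?_⟩
      have hsmall : ∀ m, |(inner ℝ (x m) (p - e j) : ℝ)| < ε/3 := by
        intro m
        have h1 : |(inner ℝ (x m) (p - e j) : ℝ)| ≤ M * ‖p - e j‖ :=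
          (abs_real_inner_le_norm _ _).trans
            (mul_le_mul_of_nonneg_right (hb m) (norm_nonneg _))
        have h2 : ‖p - e j‖ < ε / (3 * (M + 1)) := by rwa [dist_eq_norm] at hdc
        have h3 : M * ‖p - e j‖ ≤ (M+1) * ‖p - e j‖ :=
          mul_le_mul_of_nonneg_right (by linarith) (norm_nonneg _)
        have h4 : (M+1) * ‖p - e j‖ < (M+1) * (ε / (3*(M+1))) :=
          mul_lt_mul_of_pos_left h2 (by linarith)
        have h5 : (M+1) * (ε / (3*(M+1))) = ε/3 := by field_simp
        linarith
      have hmid : |F (φ k) j - F (φ N) j| < ε/3 := by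
        have := hN k hk
        rwa [Real.dist_eq] at this
      have expand : (inner ℝ (x (φ k)) p : ℝ) - inner ℝ (x (φ N)) p =
          (inner ℝ (x (φ k)) (p - e j) : ℝ) + (F (φ k) j - F (φ N) j)
            - (inner ℝ (x (φ N)) (p - e j) : ℝ) := by
        simp only [hF, inner_sub_right]; ring
      rw [Real.dist_eq, expand]
      have h6 := hsmall (φ k); have h7 := hsmall (φ N)
      have habs : |(inner ℝ (x (φ k)) (p - e j) : ℝ) + (F (φ k) j - F (φ N) j)
            - (inner ℝ (x (φ N)) (p - e j) : ℝ)| ≤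
          |(inner ℝ (x (φ k)) (p - e j) : ℝ)| + |F (φ k) j - F (φ N) j|
            + |(inner ℝ (x (φ N)) (p - e j) : ℝ)| := by
        apply (abs_sub _ _).trans
        gcongr
        exact abs_add_le _ _
      linarith
    have heq : (fun k => (inner ℝ (x (φ k)) y : ℝ)) = fun k => (inner ℝ (x (φ k)) p : ℝ) := by
      funext k; exact hip (φ k)
    rw [heq]; exact hmain
  have hex : ∀ y : H, ∃ l : ℝ, Tendsto (fun k => (inner ℝ (x (φ k)) y : ℝ)) atTop (nhds l) :=
    fun y => cauchySeq_tendsto_of_complete (key y)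
  choose f hf using hex
  have hadd : ∀ y z : H, f (y + z) = f y + f z := by
    intro y z
    refine tendsto_nhds_unique (hf (y + z)) ?_
    have heq : (fun k => (inner ℝ (x (φ k)) (y + z) : ℝ)) =
        fun k => (inner ℝ (x (φ k)) y : ℝ) + (inner ℝ (x (φ k)) z : ℝ) := by
      funext k; rw [inner_add_right]
    rw [heq]; exact (hf y).add (hf z)
  have hsmul : ∀ (r : ℝ) (y : H), f (r • y) = r * f y := by
    intro r y
    refine tendsto_nhds_unique (hf (r • y)) ?_
    have heq : (fun k => (inner ℝ (x (φ k)) (r • y) : ℝ)) =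
        fun k => r * (inner ℝ (x (φ k)) y : ℝ) := by
      funext k; rw [real_inner_smul_right]
    rw [heq]; exact (hf y).const_mul r
  have hbound : ∀ y : H, |f y| ≤ M * ‖y‖ := by
    intro y
    have h1 : Tendsto (fun k => |(inner ℝ (x (φ k)) y : ℝ)|) atTop (nhds |f y|) :=
      (hf y).abs
    refine le_of_tendsto h1 (Eventually.of_forall fun k => ?_)
    exact (abs_real_inner_le_norm _ _).trans
      (mul_le_mul_of_nonneg_right (hb _) (norm_nonneg _))
  let flin : H →ₗ[ℝ] ℝ :=
    { toFun := f
      map_add' := hadd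
      map_smul' := hsmul }
  let F' : H →L[ℝ] ℝ := LinearMap.mkContinuous flin M (fun y => by
    simpa [flin] using hbound y)
  refine ⟨φ, hφ, (InnerProductSpace.toDual ℝ H).symm F', fun y => ?_⟩
  have heq : (inner ℝ ((InnerProductSpace.toDual ℝ H).symm F') y : ℝ) = F' y :=
    InnerProductSpace.toDual_symm_apply
  rw [heq]
  exact hf y


set_option maxHeartbeats 1000000 in
/-- Theorem 4.2 specialized to Hilbert space: weak convergence of the
forward-reflected-backward method. -/
theorem forward_reflected_backward_weak_convergence
    {H : Type*} [NormedAddCommGroup H] [InnerProductSpace ℝ H] [CompleteSpace H]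
    (A : H → H) (B : H → Set H) (L δ μ : ℝ)
    (hδ0 : 0 < δ) (hδ1 : δ < 1 / 2) (hL : 0 < L)
    (hμl : δ ≤ μ) (hμu : μ ≤ (1 - 2 * δ) / (2 * L))
    (hA : ∀ x y : H, 0 ≤ (inner ℝ (A x - A y) (x - y) : ℝ))
    (hlip : ∀ x y : H, ‖A x - A y‖ ≤ L * ‖x - y‖)
    (hBmono : ∀ x y u w : H, u ∈ B x → w ∈ B y → 0 ≤ (inner ℝ (u - w) (x - y) : ℝ))
    (hBmax : ∀ x u : H, (∀ y w : H, w ∈ B y → 0 ≤ (inner ℝ (u - w) (x - y) : ℝ)) → u ∈ B x)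
    (hzero : ∃ z : H, -A z ∈ B z)
    (v : ℕ → H)
    (hres : ∀ n, 1 ≤ n →
      (1 / μ) • (v n - μ • ((2 : ℝ) • A (v n) - A (v (n - 1))) - v (n + 1)) ∈ B (v (n + 1))) :
    ∃ u : H, -A u ∈ B u ∧
      ∀ y : H, Tendsto (fun n => (inner ℝ (v n) y : ℝ)) atTop (nhds (inner ℝ u y : ℝ)) := by
  have hμ0 : 0 < μ := lt_of_lt_of_le hδ0 hμl
  have hμL : μ * L ≤ 1/2 - δ := by
    rw [le_div_iff₀ (by positivity)] at hμu
    linarith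
  have hκ : 0 < 1 - 2*(μ*L) := by linarith
  obtain ⟨z₀, hz₀⟩ := hzero
  -- graph points
  obtain ⟨gb, hgb⟩ : ∃ gb : ℕ → H, gb = fun n =>
      (1/μ) • (v (n+1) - μ • ((2:ℝ) • A (v (n+1)) - A (v n)) - v (n+2)) := ⟨_, rfl⟩
  have hgbB : ∀ n, gb n ∈ B (v (n+2)) := by
    intro n
    have h := hres (n+1) (Nat.le_add_left 1 n)
    simpa [hgb] using h
  -- monotonicity inequality
  have hineq : ∀ z : H, -A z ∈ B z → ∀ n : ℕ,
      0 ≤ (inner ℝ ((v (n+1) - v (n+2))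
        - μ • ((2:ℝ) • A (v (n+1)) - A (v n) - A z)) (v (n+2) - z) : ℝ) := by
    intro z hz n
    have h0 := hBmono (v (n+2)) z (gb n) (-A z) (hgbB n) hz
    have h1 : μ • gb n = v (n+1) - μ • ((2:ℝ) • A (v (n+1)) - A (v n)) - v (n+2) := by
      simp only [hgb]
      rw [smul_smul, mul_one_div, div_self hμ0.ne', one_smul]
    have heq : (v (n+1) - v (n+2)) - μ • ((2:ℝ) • A (v (n+1)) - A (v n) - A z)
        = μ • (gb n - (-A z)) := by
      rw [sub_neg_eq_add, smul_add, h1,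
        smul_sub μ ((2:ℝ) • A (v (n+1)) - A (v n)) (A z)]
      abel
    rw [heq, real_inner_smul_left]
    exact mul_nonneg hμ0.le h0
  -- Lyapunov function
  obtain ⟨Φ, hΦ⟩ : ∃ Φ : H → ℕ → ℝ, Φ = fun z n =>
      ‖v (n+1) - z‖^2 + 2*μ*(inner ℝ (A (v (n+1)) - A (v n)) (z - v (n+1)) : ℝ)
        + μ*L*‖v (n+1) - v n‖^2 := ⟨_, rfl⟩
  have hstep : ∀ z : H, -A z ∈ B z → ∀ n : ℕ,
      Φ z (n+1) ≤ Φ z n - (1-2*(μ*L))*‖v (n+2) - v (n+1)‖^2 := by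
    intro z hz n
    have h := key_alg (v (n+2)) (v (n+1)) (v n) z (A (v (n+2))) (A (v (n+1))) (A (v n)) (A z)
      μ L hμ0 hL (hineq z hz n) (hA (v (n+2)) z) (hlip (v (n+1)) (v n))
    simp only [hΦ]
    linarith
  have hlow : ∀ z : H, ∀ n : ℕ, (1/2)*‖v (n+1) - z‖^2 ≤ Φ z n := by
    intro z n
    have h1 : |(inner ℝ (A (v (n+1)) - A (v n)) (z - v (n+1)) : ℝ)|
        ≤ (L*‖v (n+1) - v n‖) * ‖v (n+1) - z‖ := by
      refine (abs_real_inner_le_norm _ _).trans ?_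
      rw [norm_sub_rev z]
      exact mul_le_mul_of_nonneg_right (hlip _ _) (norm_nonneg _)
    have h2 := neg_abs_le (inner ℝ (A (v (n+1)) - A (v n)) (z - v (n+1)) : ℝ)
    have h3 : -((L*‖v (n+1) - v n‖) * ‖v (n+1) - z‖)
        ≤ (inner ℝ (A (v (n+1)) - A (v n)) (z - v (n+1)) : ℝ) := by linarith
    have h4 := mul_le_mul_of_nonneg_left h3 (by positivity : (0:ℝ) ≤ 2*μ)
    have h5 : 0 ≤ (μ*L) * (‖v (n+1) - v n‖ - ‖v (n+1) - z‖)^2 :=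
      mul_nonneg (by positivity) (sq_nonneg _)
    have h6 : 0 ≤ (1/2 - μ*L) * ‖v (n+1) - z‖^2 := mul_nonneg (by linarith) (sq_nonneg _)
    simp only [hΦ]
    nlinarith [h4, h5, h6]
  have hanti : ∀ z : H, -A z ∈ B z → Antitone (Φ z) := by
    intro z hz
    refine antitone_nat_of_succ_le (fun n => ?_)
    have h1 := hstep z hz n
    have h2 : 0 ≤ (1-2*(μ*L))*‖v (n+2) - v (n+1)‖^2 := mul_nonneg hκ.le (sq_nonneg _)
    linarith
  have hΦnn : ∀ z : H, ∀ n : ℕ, 0 ≤ Φ z n := by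
    intro z n
    have := hlow z n
    nlinarith [sq_nonneg (‖v (n+1) - z‖)]
  have hΦconv : ∀ z : H, -A z ∈ B z → ∃ ℓ : ℝ, Tendsto (Φ z) atTop (nhds ℓ) := by
    intro z hz
    refine ⟨_, tendsto_atTop_ciInf (hanti z hz) ⟨0, ?_⟩⟩
    rintro r ⟨n, rfl⟩
    exact hΦnn z n
  -- summability of the increments
  have htel : ∀ N : ℕ, (∑ n ∈ Finset.range N, (1-2*(μ*L))*‖v (n+2) - v (n+1)‖^2)
      + Φ z₀ N ≤ Φ z₀ 0 := by
    intro N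
    induction N with
    | zero => simp
    | succ N ih =>
      rw [Finset.sum_range_succ]
      have := hstep z₀ hz₀ N
      linarith
  have hsummable : Summable (fun n => ‖v (n+2) - v (n+1)‖^2) := by
    have h1 : Summable (fun n => (1-2*(μ*L))*‖v (n+2) - v (n+1)‖^2) := by
      apply summable_of_sum_range_le (c := Φ z₀ 0)
      · intro n; exact mul_nonneg hκ.le (sq_nonneg _)
      · intro N
        have := htel N
        have := hΦnn z₀ N
        linarith
    have h2 := h1.mul_left (1-2*(μ*L))⁻¹
    have he : (fun n => (1-2*(μ*L))⁻¹ * ((1-2*(μ*L))*‖v (n+2) - v (n+1)‖^2))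
        = fun n => ‖v (n+2) - v (n+1)‖^2 := by
      funext n; rw [inv_mul_cancel_left₀ hκ.ne']
    rwa [he] at h2
  have hΔ1norm : Tendsto (fun n => ‖v (n+2) - v (n+1)‖) atTop (nhds 0) := by
    have h2 : ∀ n : ℕ, ‖v (n+2) - v (n+1)‖ = Real.sqrt (‖v (n+2) - v (n+1)‖^2) :=
      fun n => (Real.sqrt_sq (norm_nonneg _)).symm
    rw [funext h2]
    have h3 := hsummable.tendsto_atTop_zero.sqrt
    simpa using h3
  have hΔnorm : Tendsto (fun n => ‖v (n+1) - v n‖) atTop (nhds 0) :=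
    (tendsto_add_atTop_iff_nat 1).mp hΔ1norm
  have hΔv : Tendsto (fun n => v (n+1) - v n) atTop (nhds 0) :=
    tendsto_zero_iff_norm_tendsto_zero.mpr hΔnorm
  have hΔv1 : Tendsto (fun n => v (n+2) - v (n+1)) atTop (nhds 0) :=
    tendsto_zero_iff_norm_tendsto_zero.mpr hΔ1norm
  have hd2 : Tendsto (fun n => v (n+2) - v n) atTop (nhds 0) := by
    have h1 := hΔv1.add hΔv
    simpa using h1
  have haΔ : Tendsto (fun n => A (v (n+1)) - A (v n)) atTop (nhds 0) := by
    refine squeeze_zero_norm (fun n => hlip _ _) ?_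
    simpa using hΔnorm.const_mul L
  have hda2 : Tendsto (fun n => A (v (n+2)) - A (v n)) atTop (nhds 0) := by
    refine squeeze_zero_norm (fun n => hlip _ _) ?_
    simpa using (tendsto_zero_iff_norm_tendsto_zero.mp hd2).const_mul L
  -- boundedness
  obtain ⟨M, hbd⟩ : ∃ M : ℝ, ∀ n, ‖v n‖ ≤ M := by
    refine ⟨max ‖v 0‖ (‖z₀‖ + Real.sqrt (2 * Φ z₀ 0)), fun n => ?_⟩
    match n with
    | 0 => exact le_max_left _ _
    | (m+1) =>
      refine le_trans ?_ (le_max_right _ _)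
      have h1 : (1/2)*‖v (m+1) - z₀‖^2 ≤ Φ z₀ m := hlow z₀ m
      have h2 : Φ z₀ m ≤ Φ z₀ 0 := hanti z₀ hz₀ (Nat.zero_le m)
      have h3 : ‖v (m+1) - z₀‖^2 ≤ 2 * Φ z₀ 0 := by linarith
      have h4 : ‖v (m+1) - z₀‖ ≤ Real.sqrt (2 * Φ z₀ 0) := by
        rw [← Real.sqrt_sq (norm_nonneg (v (m+1) - z₀))]
        exact Real.sqrt_le_sqrt h3
      have h5 : ‖v (m+1)‖ ≤ ‖v (m+1) - z₀‖ + ‖z₀‖ := by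
        simpa using norm_add_le (v (m+1) - z₀) z₀
      linarith
  obtain ⟨MA, hbdA⟩ : ∃ MA : ℝ, ∀ n, ‖A (v n)‖ ≤ MA := by
    refine ⟨‖A (v 0)‖ + L * (M + M), fun n => ?_⟩
    have h1 : ‖A (v n) - A (v 0)‖ ≤ L * ‖v n - v 0‖ := hlip _ _
    have h2 : ‖v n - v 0‖ ≤ M + M := by
      refine (norm_sub_le _ _).trans ?_
      exact add_le_add (hbd n) (hbd 0)
    have h3 : ‖A (v n)‖ ≤ ‖A (v n) - A (v 0)‖ + ‖A (v 0)‖ := by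
      simpa using norm_add_le (A (v n) - A (v 0)) (A (v 0))
    have h4 : L * ‖v n - v 0‖ ≤ L * (M + M) :=
      mul_le_mul_of_nonneg_left h2 hL.le
    linarith
  -- existence of limits of distances
  have hlimsq : ∀ z : H, -A z ∈ B z →
      ∃ ℓ : ℝ, Tendsto (fun n => ‖v n - z‖^2) atTop (nhds ℓ) := by
    intro z hz
    obtain ⟨ℓ, hℓ⟩ := hΦconv z hz
    refine ⟨ℓ, ?_⟩
    have t1 : Tendsto (fun n => (inner ℝ (A (v (n+1)) - A (v n)) (z - v (n+1)) : ℝ))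
        atTop (nhds 0) := by
      refine squeeze_zero_norm (a := fun n => ‖A (v (n+1)) - A (v n)‖ * (‖z‖ + M)) ?_ ?_
      · intro n
        refine (abs_real_inner_le_norm _ _).trans ?_
        refine mul_le_mul_of_nonneg_left ?_ (norm_nonneg _)
        exact (norm_sub_le _ _).trans (add_le_add le_rfl (hbd (n+1)))
      · simpa using (tendsto_zero_iff_norm_tendsto_zero.mp haΔ).mul_const (‖z‖ + M)
    have t2 : Tendsto (fun n => ‖v (n+1) - v n‖^2) atTop (nhds 0) := by
      have := hΔnorm.mul hΔnorm
      simpa [pow_two] using this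
    have hc : Tendsto (fun n => 2*μ*(inner ℝ (A (v (n+1)) - A (v n)) (z - v (n+1)) : ℝ)
        + μ*L*‖v (n+1) - v n‖^2) atTop (nhds 0) := by
      have := (t1.const_mul (2*μ)).add (t2.const_mul (μ*L))
      simpa using this
    have h2 : Tendsto (fun n => ‖v (n+1) - z‖^2) atTop (nhds ℓ) := by
      have he : (fun n => ‖v (n+1) - z‖^2)
          = fun n => Φ z n - (2*μ*(inner ℝ (A (v (n+1)) - A (v n)) (z - v (n+1)) : ℝ)
            + μ*L*‖v (n+1) - v n‖^2) := by
        funext n; simp only [hΦ]; ring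
      rw [he]
      simpa using hℓ.sub hc
    exact (tendsto_add_atTop_iff_nat 1).mp h2
  -- strong convergence of resolvent residuals
  have hrepr : ∀ n, gb n + A (v (n+2)) = (1/μ) • (v (n+1) - v (n+2))
      + (A (v (n+2)) - A (v (n+1))) - (A (v (n+1)) - A (v n)) := by
    intro n
    simp only [hgb]
    have h1 : (1/μ) • (μ • ((2:ℝ) • A (v (n+1)) - A (v n)))
        = (2:ℝ) • A (v (n+1)) - A (v n) := by
      rw [smul_smul, one_div, inv_mul_cancel₀ hμ0.ne', one_smul]
    rw [show v (n+1) - μ • ((2:ℝ) • A (v (n+1)) - A (v n)) - v (n+2)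
        = (v (n+1) - v (n+2)) - μ • ((2:ℝ) • A (v (n+1)) - A (v n)) by abel,
      smul_sub, h1, two_smul]
    abel
  have heps : Tendsto (fun n => gb n + A (v (n+2))) atTop (nhds 0) := by
    rw [funext hrepr]
    have t1 : Tendsto (fun n => (1/μ) • (v (n+1) - v (n+2))) atTop (nhds 0) := by
      have h2 := hΔv1.neg.const_smul (1/μ)
      simpa [neg_sub] using h2
    have t2 : Tendsto (fun n => A (v (n+2)) - A (v (n+1))) atTop (nhds 0) := by
      refine squeeze_zero_norm (fun n => hlip _ _) ?_
      simpa using hΔ1norm.const_mul L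
    have := (t1.add t2).sub haΔ
    simpa using this
  have hepsn : Tendsto (fun n => ‖gb n + A (v (n+2))‖) atTop (nhds 0) :=
    tendsto_zero_iff_norm_tendsto_zero.mp heps
  -- identification of weak cluster points
  have hident : ∀ (ns : ℕ → ℕ) (u' ab : H), Tendsto ns atTop atTop →
      (∀ y : H, Tendsto (fun k => (inner ℝ (v (ns k)) y : ℝ)) atTop (nhds (inner ℝ u' y : ℝ))) →
      (∀ y : H, Tendsto (fun k => (inner ℝ (A (v (ns k))) y : ℝ)) atTop (nhds (inner ℝ ab y : ℝ))) →
      -A u' ∈ B u' := by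
    intro ns u' ab hns hwv hwa
    have hwv2 : ∀ y : H, Tendsto (fun k => (inner ℝ (v (ns k + 2)) y : ℝ)) atTop
        (nhds (inner ℝ u' y : ℝ)) := by
      intro y
      have h1 : Tendsto (fun k => (inner ℝ (v (ns k + 2) - v (ns k)) y : ℝ)) atTop (nhds 0) := by
        have h2 := Filter.Tendsto.inner (𝕜 := ℝ) (hd2.comp hns) (tendsto_const_nhds (x := y))
        simpa [Function.comp] using h2
      have h2 := (hwv y).add h1
      have e : (fun k => (inner ℝ (v (ns k)) y : ℝ) + (inner ℝ (v (ns k + 2) - v (ns k)) y : ℝ))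
          = fun k => (inner ℝ (v (ns k + 2)) y : ℝ) := by
        funext k; rw [inner_sub_left]; ring
      rw [e] at h2
      simpa using h2
    have hwa2 : ∀ y : H, Tendsto (fun k => (inner ℝ (A (v (ns k + 2))) y : ℝ)) atTop
        (nhds (inner ℝ ab y : ℝ)) := by
      intro y
      have h1 : Tendsto (fun k => (inner ℝ (A (v (ns k + 2)) - A (v (ns k))) y : ℝ)) atTop
          (nhds 0) := by
        have h2 := Filter.Tendsto.inner (𝕜 := ℝ) (hda2.comp hns) (tendsto_const_nhds (x := y))
        simpa [Function.comp] using h2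
      have h2 := (hwa y).add h1
      have e : (fun k => (inner ℝ (A (v (ns k))) y : ℝ)
            + (inner ℝ (A (v (ns k + 2)) - A (v (ns k))) y : ℝ))
          = fun k => (inner ℝ (A (v (ns k + 2))) y : ℝ) := by
        funext k; rw [inner_sub_left]; ring
      rw [e] at h2
      simpa using h2
    have hweakc : ∀ c : H, Tendsto (fun k => (inner ℝ c (v (ns k + 2) - u') : ℝ)) atTop
        (nhds 0) := by
      intro c
      have h2 := (hwv2 c).sub (tendsto_const_nhds (x := (inner ℝ u' c : ℝ)))
      have h3 : (fun k => (inner ℝ (v (ns k + 2)) c : ℝ) - (inner ℝ u' c : ℝ))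
          = fun k => (inner ℝ c (v (ns k + 2) - u') : ℝ) := by
        funext k
        rw [inner_sub_right, real_inner_comm c (v (ns k + 2)), real_inner_comm c u']
      rw [h3] at h2
      simpa using h2
    have hepsc : ∀ c : H, Tendsto
        (fun k => (inner ℝ (gb (ns k) + A (v (ns k + 2))) (v (ns k + 2) - c) : ℝ)) atTop
        (nhds 0) := by
      intro c
      refine squeeze_zero_norm
        (a := fun k => ‖gb (ns k) + A (v (ns k + 2))‖ * (M + ‖c‖)) ?_ ?_
      · intro k
        refine (abs_real_inner_le_norm _ _).trans ?_
        refine mul_le_mul_of_nonneg_left ?_ (norm_nonneg _)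
        exact (norm_sub_le _ _).trans (add_le_add (hbd _) le_rfl)
      · have h1 := (hepsn.comp hns).mul_const (M + ‖c‖)
        simpa [Function.comp] using h1
    have hstep1 : -ab ∈ B u' := by
      apply hBmax
      intro y w hw
      have key0 : ∀ k, 0 ≤ (inner ℝ (gb (ns k) - w) (v (ns k + 2) - y) : ℝ)
          + (inner ℝ (A (v (ns k + 2)) - A u') (v (ns k + 2) - u') : ℝ) :=
        fun k => add_nonneg (hBmono (v (ns k + 2)) y (gb (ns k)) w (hgbB (ns k)) hw)
          (hA (v (ns k + 2)) u')
      have e : (fun k => (inner ℝ (gb (ns k) - w) (v (ns k + 2) - y) : ℝ)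
            + (inner ℝ (A (v (ns k + 2)) - A u') (v (ns k + 2) - u') : ℝ))
          = fun k => (inner ℝ (gb (ns k) + A (v (ns k + 2))) (v (ns k + 2) - y) : ℝ)
            + (inner ℝ (A (v (ns k + 2))) (y - u') : ℝ)
            - (inner ℝ w (v (ns k + 2) - y) : ℝ)
            - (inner ℝ (A u') (v (ns k + 2) - u') : ℝ) := by
        funext k
        simp only [inner_sub_left, inner_add_left, inner_sub_right]
        ring
      have hw3 : Tendsto (fun k => (inner ℝ w (v (ns k + 2) - y) : ℝ)) atTop
          (nhds (inner ℝ w (u' - y) : ℝ)) := by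
        have h1 := hweakc w
        have e2 : (fun k => (inner ℝ w (v (ns k + 2) - u') : ℝ) + (inner ℝ w (u' - y) : ℝ))
            = fun k => (inner ℝ w (v (ns k + 2) - y) : ℝ) := by
          funext k; rw [← inner_add_right]; congr 1; abel
        have h2 := h1.add (tendsto_const_nhds (x := (inner ℝ w (u' - y) : ℝ)))
        rw [e2] at h2
        simpa using h2
      have hlim : Tendsto (fun k => (inner ℝ (gb (ns k) - w) (v (ns k + 2) - y) : ℝ)
            + (inner ℝ (A (v (ns k + 2)) - A u') (v (ns k + 2) - u') : ℝ)) atTop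
          (nhds (0 + (inner ℝ ab (y - u') : ℝ) - (inner ℝ w (u' - y) : ℝ) - 0)) := by
        rw [e]
        exact (((hepsc y).add (hwa2 (y - u'))).sub hw3).sub (hweakc (A u'))
      have h6 := ge_of_tendsto' hlim key0
      have e3 : (0 + (inner ℝ ab (y - u') : ℝ) - (inner ℝ w (u' - y) : ℝ) - 0)
          = (inner ℝ (-ab - w) (u' - y) : ℝ) := by
        simp only [inner_sub_left, inner_sub_right, inner_neg_left]
        ring
      rw [e3] at h6
      exact h6
    have hgbu : ∀ k, 0 ≤ (inner ℝ (gb (ns k) + ab) (v (ns k + 2) - u') : ℝ) := by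
      intro k
      have h := hBmono (v (ns k + 2)) u' (gb (ns k)) (-ab) (hgbB (ns k)) hstep1
      simpa [sub_neg_eq_add] using h
    have hS0 : Tendsto (fun k => (inner ℝ (A (v (ns k + 2)) - A u') (v (ns k + 2) - u') : ℝ))
        atTop (nhds 0) := by
      have hub : ∀ k, (inner ℝ (A (v (ns k + 2)) - A u') (v (ns k + 2) - u') : ℝ)
          ≤ (inner ℝ (gb (ns k) + A (v (ns k + 2))) (v (ns k + 2) - u') : ℝ)
            + (inner ℝ (ab - A u') (v (ns k + 2) - u') : ℝ) := by
        intro k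
        have h := hgbu k
        have e : (inner ℝ (gb (ns k) + A (v (ns k + 2))) (v (ns k + 2) - u') : ℝ)
            + (inner ℝ (ab - A u') (v (ns k + 2) - u') : ℝ)
            - (inner ℝ (A (v (ns k + 2)) - A u') (v (ns k + 2) - u') : ℝ)
            = (inner ℝ (gb (ns k) + ab) (v (ns k + 2) - u') : ℝ) := by
          simp only [inner_add_left, inner_sub_left]
          ring
        linarith
      have hup : Tendsto (fun k => (inner ℝ (gb (ns k) + A (v (ns k + 2))) (v (ns k + 2) - u') : ℝ)
          + (inner ℝ (ab - A u') (v (ns k + 2) - u') : ℝ)) atTop (nhds 0) := by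
        have := (hepsc u').add (hweakc (ab - A u'))
        simpa using this
      exact tendsto_of_tendsto_of_tendsto_of_le_of_le tendsto_const_nhds hup
        (fun k => hA _ _) hub
    have hAx : ∀ x : H, 0 ≤ (inner ℝ (ab - A x) (u' - x) : ℝ) := by
      intro x
      have e : (fun k => (inner ℝ (A (v (ns k + 2)) - A x) (v (ns k + 2) - x) : ℝ))
          = fun k => (inner ℝ (A (v (ns k + 2)) - A u') (v (ns k + 2) - u') : ℝ)
            + (inner ℝ (A u' - A x) (v (ns k + 2) - u') : ℝ)
            + (inner ℝ (A (v (ns k + 2))) (u' - x) : ℝ)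
            - (inner ℝ (A x) (u' - x) : ℝ) := by
        funext k
        simp only [inner_sub_left, inner_sub_right]
        ring
      have hlim : Tendsto (fun k => (inner ℝ (A (v (ns k + 2)) - A x) (v (ns k + 2) - x) : ℝ))
          atTop (nhds (0 + 0 + (inner ℝ ab (u' - x) : ℝ) - (inner ℝ (A x) (u' - x) : ℝ))) := by
        rw [e]
        exact ((hS0.add (hweakc (A u' - A x))).add (hwa2 (u' - x))).sub tendsto_const_nhds
      have h6 := ge_of_tendsto' hlim (fun k => hA (v (ns k + 2)) x)
      have e3 : (inner ℝ (ab - A x) (u' - x) : ℝ)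
          = 0 + 0 + (inner ℝ ab (u' - x) : ℝ) - (inner ℝ (A x) (u' - x) : ℝ) := by
        rw [inner_sub_left]; ring
      linarith
    have habA : ab = A u' := by
      have hkey : ∀ t : ℝ, 0 < t →
          (inner ℝ (ab - A (u' + t • (ab - A u'))) (ab - A u') : ℝ) ≤ 0 := by
        intro t ht
        have h1 := hAx (u' + t • (ab - A u'))
        have e : u' - (u' + t • (ab - A u')) = (-t) • (ab - A u') := by
          rw [neg_smul]; abel
        rw [e, real_inner_smul_right] at h1
        nlinarith
      have h2 := hkey (1/(2*L)) (by positivity)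
      have h3 : (inner ℝ (A (u' + (1/(2*L)) • (ab - A u')) - A u') (ab - A u') : ℝ)
          ≤ (1/2) * ‖ab - A u'‖^2 := by
        refine (real_inner_le_norm _ _).trans ?_
        have h4 : ‖A (u' + (1/(2*L)) • (ab - A u')) - A u'‖
            ≤ L * ‖(1/(2*L)) • (ab - A u')‖ := by
          have := hlip (u' + (1/(2*L)) • (ab - A u')) u'
          simpa using this
        have h5 : L * ‖(1/(2*L)) • (ab - A u')‖ = (1/2) * ‖ab - A u'‖ := by
          rw [norm_smul, Real.norm_eq_abs, abs_of_pos (by positivity : (0:ℝ) < 1/(2*L))]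
          field_simp
        calc ‖A (u' + (1/(2*L)) • (ab - A u')) - A u'‖ * ‖ab - A u'‖
            ≤ (L * ‖(1/(2*L)) • (ab - A u')‖) * ‖ab - A u'‖ :=
              mul_le_mul_of_nonneg_right h4 (norm_nonneg _)
          _ = (1/2) * ‖ab - A u'‖^2 := by rw [h5]; ring
      have h6 : (inner ℝ (ab - A u') (ab - A u') : ℝ) = ‖ab - A u'‖^2 :=
        real_inner_self_eq_norm_sq _
      have h7 : (inner ℝ (ab - A u') (ab - A u') : ℝ)
          = (inner ℝ (ab - A (u' + (1/(2*L)) • (ab - A u'))) (ab - A u') : ℝ)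
            + (inner ℝ (A (u' + (1/(2*L)) • (ab - A u')) - A u') (ab - A u') : ℝ) := by
        rw [← inner_add_left]; congr 1; abel
      have h8 : ‖ab - A u'‖^2 ≤ 0 := by linarith
      have h10 : ‖ab - A u'‖ = 0 := by nlinarith [norm_nonneg (ab - A u')]
      have h9 : ab - A u' = 0 := norm_eq_zero.mp h10
      exact sub_eq_zero.mp h9
    rw [← habA]
    exact hstep1
  -- extraction of a weakly convergent subsequence
  obtain ⟨φ0, hφ0, u0, hu0⟩ := weak_seq_compact v M hbd
  obtain ⟨φ1, hφ1, ab0, hab0⟩ := weak_seq_compact (fun k => A (v (φ0 k))) MA (fun k => hbdA _)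
  have hns0 : Tendsto (fun k => φ0 (φ1 k)) atTop atTop := by
    have := hφ0.tendsto_atTop.comp hφ1.tendsto_atTop
    simpa [Function.comp_def] using this
  have hu0w : ∀ y : H, Tendsto (fun k => (inner ℝ (v (φ0 (φ1 k))) y : ℝ)) atTop
      (nhds (inner ℝ u0 y : ℝ)) := by
    intro y
    have := (hu0 y).comp hφ1.tendsto_atTop
    simpa [Function.comp_def] using this
  have hab0w : ∀ y : H, Tendsto (fun k => (inner ℝ (A (v (φ0 (φ1 k)))) y : ℝ)) atTop
      (nhds (inner ℝ ab0 y : ℝ)) := by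
    intro y
    have := hab0 y
    simpa [Function.comp] using this
  have hS : -A u0 ∈ B u0 := hident (fun k => φ0 (φ1 k)) u0 ab0 hns0 hu0w hab0w
  obtain ⟨ℓ0, hℓ0⟩ := hlimsq u0 hS
  refine ⟨u0, hS, ?_⟩
  intro y
  apply tendsto_of_subseq_tendsto
  intro ms hms
  obtain ⟨ψ0, hψ0, u1, hu1⟩ := weak_seq_compact (fun k => v (ms k)) M (fun k => hbd _)
  obtain ⟨ψ1, hψ1, ab1, hab1⟩ := weak_seq_compact (fun k => A (v (ms (ψ0 k)))) MA
    (fun k => hbdA _)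
  have hns1 : Tendsto (fun k => ms (ψ0 (ψ1 k))) atTop atTop := by
    have := hms.comp ((hψ0.tendsto_atTop).comp hψ1.tendsto_atTop)
    simpa [Function.comp_def] using this
  have hu1w : ∀ y' : H, Tendsto (fun k => (inner ℝ (v (ms (ψ0 (ψ1 k)))) y' : ℝ)) atTop
      (nhds (inner ℝ u1 y' : ℝ)) := by
    intro y'
    have := (hu1 y').comp hψ1.tendsto_atTop
    simpa [Function.comp_def] using this
  have hab1w : ∀ y' : H, Tendsto (fun k => (inner ℝ (A (v (ms (ψ0 (ψ1 k))))) y' : ℝ)) atTop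
      (nhds (inner ℝ ab1 y' : ℝ)) := by
    intro y'
    have := hab1 y'
    simpa [Function.comp] using this
  have hS1 : -A u1 ∈ B u1 := hident (fun k => ms (ψ0 (ψ1 k))) u1 ab1 hns1 hu1w hab1w
  obtain ⟨ℓ1, hℓ1⟩ := hlimsq u1 hS1
  -- Opial argument: the two weak limits coincide
  have hfull : Tendsto (fun n => (inner ℝ (v n) (u0 - u1) : ℝ)) atTop
      (nhds (((ℓ1 - ℓ0) + ‖u0‖^2 - ‖u1‖^2)/2)) := by
    have e : (fun n => (inner ℝ (v n) (u0 - u1) : ℝ))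
        = fun n => ((‖v n - u1‖^2 - ‖v n - u0‖^2) + ‖u0‖^2 - ‖u1‖^2)/2 := by
      funext n
      have e0 := @norm_sub_sq_real H _ _ (v n) u0
      have e1 := @norm_sub_sq_real H _ _ (v n) u1
      rw [inner_sub_right]
      linarith
    rw [e]
    exact (((hℓ1.sub hℓ0).add_const (‖u0‖^2)).sub_const (‖u1‖^2)).div_const 2
  have g0 : (inner ℝ u0 (u0 - u1) : ℝ) = ((ℓ1 - ℓ0) + ‖u0‖^2 - ‖u1‖^2)/2 :=
    tendsto_nhds_unique (hu0w (u0 - u1)) (by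
      have := hfull.comp hns0
      simpa [Function.comp_def] using this)
  have g1 : (inner ℝ u1 (u0 - u1) : ℝ) = ((ℓ1 - ℓ0) + ‖u0‖^2 - ‖u1‖^2)/2 :=
    tendsto_nhds_unique (hu1w (u0 - u1)) (by
      have := hfull.comp hns1
      simpa [Function.comp_def] using this)
  have hu01 : u0 = u1 := by
    have hz : (inner ℝ (u0 - u1) (u0 - u1) : ℝ) = 0 := by
      rw [inner_sub_left]; linarith
    exact sub_eq_zero.mp ((inner_self_eq_zero (𝕜 := ℝ)).mp hz)
  refine ⟨fun k => ψ0 (ψ1 k), ?_⟩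
  have hfin := hu1w y
  rw [← hu01] at hfin
  exact hfin
end

section
/- Let H be a real Hilbert space, A : H → H monotone and L-Lipschitz, B maximal monotone, z ∈ (A+B)⁻¹(0), μ ∈ [δ, (1-2δ)/(2L)] with δ ∈ (0,1/2), and (v_n) generated by v_{n+1} = (I+μB)⁻¹(v_n - μ(2Av_n - Av_{n-1})). Then Σ_{j=1}^n ‖v_{j+1} - v_j‖² ≤ (2/δ)[½‖z - v_1‖² + μ⟨Av_1 - Av_0, z - v_1⟩ + ¼‖v_1 - v_0‖²] for all n ≥ 1; consequently min_{1≤j≤n} ‖v_{j+1} - v_j‖ = O(1/√n). -/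
open Filter

/-- Key one-step algebraic inequality. -/
lemma key_step_aux
    {H : Type*} [NormedAddCommGroup H] [InnerProductSpace ℝ H]
    (μ L δ : ℝ) (hμ : 0 < μ) (hδ : 0 < δ) (hδ1 : δ < 1 / 2)
    (hμL : μ * L ≤ (1 - 2 * δ) / 2)
    (a b p q r e : H)
    (h1 : 0 ≤ (inner ℝ (a - b - μ • (p + r)) b : ℝ))
    (h2 : 0 ≤ (inner ℝ (p + q) b : ℝ))
    (hr : ‖r‖ ≤ L * ‖e‖) :
    (1/2)*‖b‖^2 - μ * (inner ℝ q b : ℝ) + (1/4)*‖b - a‖^2 + (δ/2)*‖b - a‖^2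
      ≤ (1/2)*‖a‖^2 - μ * (inner ℝ r a : ℝ) + (1/4)*‖e‖^2 := by
  have e1 : (inner ℝ (a - b - μ • (p + r)) b : ℝ)
      = (inner ℝ a b : ℝ) - ‖b‖^2 - μ * (inner ℝ p b : ℝ) - μ * (inner ℝ r b : ℝ) := by
    simp [inner_sub_left, inner_add_left, real_inner_smul_left,
      real_inner_self_eq_norm_sq]
    ring
  have e2 : (inner ℝ (p + q) b : ℝ) = (inner ℝ p b : ℝ) + (inner ℝ q b : ℝ) := inner_add_left _ _ _
  have e3 : ‖b - a‖^2 = ‖b‖^2 - 2 * (inner ℝ a b : ℝ) + ‖a‖^2 := by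
    rw [@norm_sub_sq_real, real_inner_comm]
  have e4 : (inner ℝ r b : ℝ) = (inner ℝ r a : ℝ) + (inner ℝ r (b - a) : ℝ) := by
    rw [inner_sub_right]; ring
  have cs : -(‖r‖ * ‖b - a‖) ≤ (inner ℝ r (b - a) : ℝ) := by
    have := abs_real_inner_le_norm r (b - a)
    have := neg_abs_le (inner ℝ r (b - a) : ℝ)
    linarith
  have hre : ‖r‖ * ‖b - a‖ ≤ L * ‖e‖ * ‖b - a‖ :=
    mul_le_mul_of_nonneg_right hr (norm_nonneg _)
  have hmul : μ * (L * (‖e‖ * ‖b - a‖)) ≤ (1/2 - δ) * (‖e‖ * ‖b - a‖) := by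
    have hED : 0 ≤ ‖e‖ * ‖b - a‖ := mul_nonneg (norm_nonneg _) (norm_nonneg _)
    have : μ * L ≤ 1/2 - δ := by linarith
    nlinarith
  have amgm : ‖e‖ * ‖b - a‖ ≤ (‖e‖^2 + ‖b - a‖^2)/2 := by
    nlinarith [sq_nonneg (‖e‖ - ‖b - a‖)]
  have hS : -(μ * (inner ℝ r (b - a) : ℝ)) ≤ μ * (L * (‖e‖ * ‖b - a‖)) := by
    have : -(inner ℝ r (b - a) : ℝ) ≤ L * (‖e‖ * ‖b - a‖) := by
      have := cs; nlinarith
    nlinarith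
  have h2' : 0 ≤ μ * (inner ℝ p b : ℝ) + μ * (inner ℝ q b : ℝ) := by
    rw [e2] at h2; nlinarith
  rw [e1] at h1
  have hhalf : 0 ≤ 1/2 - δ := by linarith
  have hEsq : (1/2 - δ) * (‖e‖ * ‖b - a‖) ≤ (1/2 - δ) * ((‖e‖^2 + ‖b - a‖^2)/2) :=
    mul_le_mul_of_nonneg_left amgm hhalf
  rw [e4] at h1
  have hδE : 0 ≤ δ * ‖e‖^2 := by positivity
  have hδD : 0 ≤ δ * ‖b - a‖^2 := by positivity
  linarith [h1, h2', hS, hmul, hEsq, e3.ge, e3.le, hδE, hδD]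

/-- Nonnegativity of the Lyapunov quantity. -/
lemma s_nonneg_aux
    {H : Type*} [NormedAddCommGroup H] [InnerProductSpace ℝ H]
    (μ L : ℝ) (hμ : 0 ≤ μ) (hμL : μ * L ≤ 1/2)
    (c e r : H) (hr : ‖r‖ ≤ L * ‖e‖) :
    0 ≤ (1/2)*‖c‖^2 + μ * (inner ℝ r c : ℝ) + (1/4)*‖e‖^2 := by
  have cs : -(‖r‖ * ‖c‖) ≤ (inner ℝ r c : ℝ) := by
    have := abs_real_inner_le_norm r c
    have := neg_abs_le (inner ℝ r c : ℝ)
    linarith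
  have h1 : -(μ * (inner ℝ r c : ℝ)) ≤ μ * (‖r‖ * ‖c‖) := by nlinarith
  have h2 : μ * (‖r‖ * ‖c‖) ≤ μ * (L * (‖e‖ * ‖c‖)) := by
    have : ‖r‖ * ‖c‖ ≤ L * ‖e‖ * ‖c‖ := mul_le_mul_of_nonneg_right hr (norm_nonneg _)
    nlinarith
  have h3 : μ * (L * (‖e‖ * ‖c‖)) ≤ (1/2) * (‖e‖ * ‖c‖) := by
    have hEC : 0 ≤ ‖e‖ * ‖c‖ := mul_nonneg (norm_nonneg _) (norm_nonneg _)
    nlinarith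
  have amgm : ‖e‖ * ‖c‖ ≤ (‖e‖^2 + ‖c‖^2)/2 := by
    nlinarith [sq_nonneg (‖e‖ - ‖c‖)]
  nlinarith [sq_nonneg ‖c‖]

/-- Theorem 4.10 specialized to Hilbert space: sublinear rate of convergence. -/
theorem sublinear_rate
    {H : Type*} [NormedAddCommGroup H] [InnerProductSpace ℝ H]
    (A : H → H) (B : H → Set H) (L δ μ : ℝ)
    (hδ0 : 0 < δ) (hδ1 : δ < 1 / 2) (hL : 0 < L)
    (hμl : δ ≤ μ) (hμu : μ ≤ (1 - 2 * δ) / (2 * L))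
    (hA : ∀ x y : H, 0 ≤ (inner ℝ (A x - A y) (x - y) : ℝ))
    (hlip : ∀ x y : H, ‖A x - A y‖ ≤ L * ‖x - y‖)
    (hBmono : ∀ x y u w : H, u ∈ B x → w ∈ B y → 0 ≤ (inner ℝ (u - w) (x - y) : ℝ))
    (hBmax : ∀ x u : H, (∀ y w : H, w ∈ B y → 0 ≤ (inner ℝ (u - w) (x - y) : ℝ)) → u ∈ B x)
    (z : H) (hz : -A z ∈ B z)
    (v : ℕ → H)
    (hres : ∀ n, 1 ≤ n →
      (1 / μ) • (v n - μ • ((2 : ℝ) • A (v n) - A (v (n - 1))) - v (n + 1)) ∈ B (v (n + 1))) :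
    (∀ n, 1 ≤ n →
      ∑ j ∈ Finset.Icc 1 n, ‖v (j + 1) - v j‖ ^ 2 ≤
        (2 / δ) * ((1 / 2) * ‖z - v 1‖ ^ 2
          + μ * (inner ℝ (A (v 1) - A (v 0)) (z - v 1) : ℝ)
          + (1 / 4) * ‖v 1 - v 0‖ ^ 2)) ∧
      ∃ C : ℝ, ∀ n : ℕ, 1 ≤ n →
        ∃ j, 1 ≤ j ∧ j ≤ n ∧ ‖v (j + 1) - v j‖ ≤ C / Real.sqrt n := by
  have hμ0 : 0 < μ := lt_of_lt_of_le hδ0 hμl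
  have hμL : μ * L ≤ (1 - 2 * δ) / 2 := by
    rw [le_div_iff₀ (by positivity : (0:ℝ) < 2 * L)] at hμu
    linarith
  -- Lyapunov function
  obtain ⟨s, hs⟩ : ∃ s : ℕ → ℝ, s = fun n => (1/2)*‖v n - z‖^2
      - μ * (inner ℝ (A (v n) - A (v (n-1))) (v n - z) : ℝ)
      + (1/4)*‖v n - v (n-1)‖^2 := ⟨_, rfl⟩
  -- one-step decrease
  have step : ∀ n, 1 ≤ n → (δ/2)*‖v (n+1) - v n‖^2 ≤ s n - s (n+1) := by
    intro n hn
    have hmem := hres n hn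
    have hmono := hBmono (v (n+1)) z _ _ hmem hz
    set a := v n - z with ha
    set b := v (n+1) - z with hb
    set p := A (v n) - A z with hp
    set q := A (v (n+1)) - A (v n) with hq
    set r := A (v n) - A (v (n-1)) with hR
    set e := v n - v (n-1) with he
    have hveq : a - b - μ • (p + r)
        = μ • ((1 / μ) • (v n - μ • ((2 : ℝ) • A (v n) - A (v (n-1))) - v (n + 1)) - -A z) := by
      rw [ha, hb, hp, hR]
      rw [smul_sub, smul_smul, mul_one_div, div_self hμ0.ne', one_smul]
      module
    have h1 : 0 ≤ (inner ℝ (a - b - μ • (p + r)) b : ℝ) := by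
      rw [hveq, real_inner_smul_left]
      exact mul_nonneg hμ0.le hmono
    have h2 : 0 ≤ (inner ℝ (p + q) b : ℝ) := by
      have hpq : p + q = A (v (n+1)) - A z := by rw [hp, hq]; abel
      rw [hpq]
      exact hA (v (n+1)) z
    have hrle : ‖r‖ ≤ L * ‖e‖ := hlip (v n) (v (n-1))
    have key := key_step_aux μ L δ hμ0 hδ0 hδ1 hμL a b p q r e h1 h2 hrle
    have hba : b - a = v (n+1) - v n := by rw [ha, hb]; abel
    have hsn : s n = (1/2)*‖a‖^2 - μ * (inner ℝ r a : ℝ) + (1/4)*‖e‖^2 := by rw [hs]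
    have hsn1 : s (n+1) = (1/2)*‖b‖^2 - μ * (inner ℝ q b : ℝ) + (1/4)*‖b - a‖^2 := by
      have h11 : n + 1 - 1 = n := rfl
      rw [hs]
      simp only [h11]
      rw [hba]
    rw [hsn, hsn1, ← hba]
    linarith
  -- nonnegativity of s
  have snn : ∀ n, 1 ≤ n → 0 ≤ s n := by
    intro n hn
    have hμL2 : μ * L ≤ 1/2 := by linarith
    have := s_nonneg_aux μ L hμ0.le hμL2 (v n - z)
      (v n - v (n-1)) (-(A (v n) - A (v (n-1)))) (by rw [norm_neg]; exact hlip _ _)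
    rw [inner_neg_left] at this
    rw [hs]
    linarith
  -- telescoping
  have tele : ∀ n, 1 ≤ n →
      ∑ j ∈ Finset.Icc 1 n, (δ/2)*‖v (j+1) - v j‖^2 ≤ s 1 - s (n+1) := by
    intro n hn
    induction n with
    | zero => omega
    | succ m ih =>
      rcases Nat.lt_or_ge m 1 with hm | hm
      · interval_cases m
        simpa using step 1 le_rfl
      · have h1 : ∑ j ∈ Finset.Icc 1 (m+1), (δ/2)*‖v (j+1) - v j‖^2
            = (∑ j ∈ Finset.Icc 1 m, (δ/2)*‖v (j+1) - v j‖^2) + (δ/2)*‖v (m+2) - v (m+1)‖^2 := by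
          rw [← Finset.sum_Icc_succ_top (by omega : 1 ≤ m + 1)]
        have := ih hm
        have := step (m+1) (by omega)
        rw [h1]
        linarith
  -- the main sum bound
  have sumbd : ∀ n, 1 ≤ n →
      ∑ j ∈ Finset.Icc 1 n, ‖v (j+1) - v j‖^2 ≤ (2/δ) * s 1 := by
    intro n hn
    have h1 := tele n hn
    have h2 := snn (n+1) (by omega)
    rw [← Finset.mul_sum] at h1
    have h3 : (δ/2) * ∑ j ∈ Finset.Icc 1 n, ‖v (j+1) - v j‖^2 ≤ s 1 := by linarith
    rw [show (2/δ) * s 1 = (2 * s 1) / δ by ring, le_div_iff₀ hδ0]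
    linarith
  -- identify s 1 with the statement's quantity
  have hs1 : (1 / 2) * ‖z - v 1‖ ^ 2
        + μ * (inner ℝ (A (v 1) - A (v 0)) (z - v 1) : ℝ)
        + (1 / 4) * ‖v 1 - v 0‖ ^ 2 = s 1 := by
    rw [hs]
    have h10 : (1:ℕ) - 1 = 0 := rfl
    simp only [h10]
    rw [norm_sub_rev z (v 1), show z - v 1 = -(v 1 - z) by abel, inner_neg_right]
    ring
  have hs1nn : 0 ≤ s 1 := snn 1 le_rfl
  constructor
  · intro n hn
    rw [hs1]
    exact sumbd n hn
  · refine ⟨Real.sqrt ((2/δ) * s 1), ?_⟩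
    intro n hn
    obtain ⟨j, hjmem, hjmin⟩ := Finset.exists_min_image (Finset.Icc 1 n)
      (fun j => ‖v (j+1) - v j‖) ⟨1, by simp [hn]⟩
    rw [Finset.mem_Icc] at hjmem
    refine ⟨j, hjmem.1, hjmem.2, ?_⟩
    have hcard : (Finset.Icc 1 n).card = n := by rw [Nat.card_Icc]; omega
    have hsum : (n:ℝ) * ‖v (j+1) - v j‖^2 ≤ ∑ i ∈ Finset.Icc 1 n, ‖v (i+1) - v i‖^2 := by
      calc (n:ℝ) * ‖v (j+1) - v j‖^2
          = ∑ _i ∈ Finset.Icc 1 n, ‖v (j+1) - v j‖^2 := by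
            rw [Finset.sum_const, hcard, nsmul_eq_mul]
        _ ≤ ∑ i ∈ Finset.Icc 1 n, ‖v (i+1) - v i‖^2 :=
            Finset.sum_le_sum fun i hi =>
              pow_le_pow_left₀ (norm_nonneg _) (hjmin i hi) 2
    have hn0 : (0:ℝ) < (n:ℝ) := by exact_mod_cast hn
    have hC0 : 0 ≤ (2/δ) * s 1 := mul_nonneg (by positivity) hs1nn
    have hsq : ‖v (j+1) - v j‖^2 ≤ ((2/δ) * s 1) / n := by
      rw [le_div_iff₀ hn0]
      have := sumbd n hn
      nlinarith
    calc ‖v (j+1) - v j‖ = Real.sqrt (‖v (j+1) - v j‖^2) :=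
          (Real.sqrt_sq (norm_nonneg _)).symm
      _ ≤ Real.sqrt (((2/δ) * s 1) / n) := Real.sqrt_le_sqrt hsq
      _ = Real.sqrt ((2/δ) * s 1) / Real.sqrt n := Real.sqrt_div hC0 _
end

section
/- Strongly monotone variant of Lemma 4.1: in a real Hilbert space, if B is maximal monotone and τ-strongly monotone, A is monotone, z ∈ (A+B)⁻¹(0), and v_{n+1} = (I+μB)⁻¹(v_n - μ(2Av_n - Av_{n-1})), then τμ‖v_{n+1} - z‖² ≤ ½‖z - v_n‖² - ½‖z - v_{n+1}‖² + μ⟨Av_n - Av_{n-1}, z - v_n⟩ + μ⟨Av_n - Av_{n-1}, v_n - v_{n+1}⟩ + μ⟨Av_n - Av_{n+1}, z - v_{n+1}⟩ - ½‖v_{n+1} - v_n‖². -/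
/-- Lemma 4.13 (case (a)) specialized to Hilbert space: the strongly monotone
variant of Lemma 4.1. -/
theorem lemma413_strongly_monotone_B
    {H : Type*} [NormedAddCommGroup H] [InnerProductSpace ℝ H]
    (A : H → H) (B : H → Set H) (τ : ℝ) (hτ : 0 < τ)
    (hA : ∀ x y : H, 0 ≤ (inner ℝ (A x - A y) (x - y) : ℝ))
    (hBstrong : ∀ x y u w : H, u ∈ B x → w ∈ B y →
      τ * ‖x - y‖ ^ 2 ≤ (inner ℝ (u - w) (x - y) : ℝ))
    (hBmax : ∀ x u : H, (∀ y w : H, w ∈ B y → 0 ≤ (inner ℝ (u - w) (x - y) : ℝ)) → u ∈ B x)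
    (μ : ℝ) (hμ : 0 < μ) (z : H) (hz : -A z ∈ B z)
    (v : ℕ → H)
    (hres : ∀ n, 1 ≤ n →
      (1 / μ) • (v n - μ • ((2 : ℝ) • A (v n) - A (v (n - 1))) - v (n + 1)) ∈ B (v (n + 1))) :
    ∀ n, 1 ≤ n →
      τ * μ * ‖v (n + 1) - z‖ ^ 2 ≤
        (1 / 2) * ‖z - v n‖ ^ 2 - (1 / 2) * ‖z - v (n + 1)‖ ^ 2
          + μ * (inner ℝ (A (v n) - A (v (n - 1))) (z - v n) : ℝ)
          + μ * (inner ℝ (A (v n) - A (v (n - 1))) (v n - v (n + 1)) : ℝ)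
          + μ * (inner ℝ (A (v n) - A (v (n + 1))) (z - v (n + 1)) : ℝ)
          - (1 / 2) * ‖v (n + 1) - v n‖ ^ 2 := by
  intro n hn
  have hu := hres n hn
  have h1 := hBstrong (v (n + 1)) z _ (-A z) hu hz
  have h2 := mul_le_mul_of_nonneg_left (hA z (v (n + 1))) hμ.le
  have hμ' : μ ≠ 0 := ne_of_gt hμ
  have h1' := mul_le_mul_of_nonneg_left h1 hμ.le
  rw [sub_neg_eq_add, inner_add_left, real_inner_smul_left] at h1'
  rw [mul_add, ← mul_assoc μ (1 / μ), mul_one_div_cancel hμ', one_mul] at h1'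
  -- expand everything
  set a := v (n - 1)
  set b := v n
  set c := v (n + 1)
  simp only [inner_sub_left, inner_sub_right, real_inner_smul_left, two_smul,
    inner_add_left, mul_zero] at h1' h2 ⊢
  rw [show ‖c - z‖ ^ 2 = inner ℝ (c - z) (c - z) from (real_inner_self_eq_norm_sq _).symm] at h1' ⊢
  rw [show ‖z - b‖ ^ 2 = inner ℝ (z - b) (z - b) from (real_inner_self_eq_norm_sq _).symm,
    show ‖z - c‖ ^ 2 = inner ℝ (z - c) (z - c) from (real_inner_self_eq_norm_sq _).symm,
    show ‖c - b‖ ^ 2 = inner ℝ (c - b) (c - b) from (real_inner_self_eq_norm_sq _).symm]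
  simp only [inner_sub_left, inner_sub_right] at h1' ⊢
  have c1 := real_inner_comm b c
  have c2 := real_inner_comm b z
  have c3 := real_inner_comm c z
  nlinarith [h1', h2]
end

section
/- Let H be a real Hilbert space, A : H → H τ-strongly monotone and L-Lipschitz, B : H → 2^H maximal monotone with (A+B)⁻¹(0) ≠ ∅, and μ ∈ [δ, (1-2δ)/(2L)], δ ∈ (0,1/2). Then the sequence v_{n+1} = (I+μB)⁻¹(v_n - μ(2Av_n - Av_{n-1})) converges strongly (in norm) to the unique u ∈ (A+B)⁻¹(0). -/
open Filter

set_option maxHeartbeats 1000000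

/-- Theorem 4.15 specialized to Hilbert space: strong convergence when `A` is
`τ`-strongly monotone and `L`-Lipschitz. -/
theorem strong_convergence_strongly_monotone_A
    {H : Type*} [NormedAddCommGroup H] [InnerProductSpace ℝ H] [CompleteSpace H]
    (A : H → H) (B : H → Set H) (τ L δ μ : ℝ)
    (hτ : 0 < τ) (hδ0 : 0 < δ) (hδ1 : δ < 1 / 2) (hL : 0 < L)
    (hμl : δ ≤ μ) (hμu : μ ≤ (1 - 2 * δ) / (2 * L))
    (hA : ∀ x y : H, τ * ‖x - y‖ ^ 2 ≤ (inner ℝ (A x - A y) (x - y) : ℝ))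
    (hlip : ∀ x y : H, ‖A x - A y‖ ≤ L * ‖x - y‖)
    (hBmono : ∀ x y u w : H, u ∈ B x → w ∈ B y → 0 ≤ (inner ℝ (u - w) (x - y) : ℝ))
    (hBmax : ∀ x u : H, (∀ y w : H, w ∈ B y → 0 ≤ (inner ℝ (u - w) (x - y) : ℝ)) → u ∈ B x)
    (hzero : ∃ z : H, -A z ∈ B z)
    (v : ℕ → H)
    (hres : ∀ n, 1 ≤ n →
      (1 / μ) • (v n - μ • ((2 : ℝ) • A (v n) - A (v (n - 1))) - v (n + 1)) ∈ B (v (n + 1))) :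
    ∃ u : H, -A u ∈ B u ∧ (∀ w : H, -A w ∈ B w → w = u) ∧
      Tendsto v atTop (nhds u) := by
  obtain ⟨u, hu⟩ := hzero
  have hμ0 : 0 < μ := lt_of_lt_of_le hδ0 hμl
  have hμL : 2 * μ * L ≤ 1 - 2 * δ := by
    have h2L : 0 < 2 * L := by positivity
    have := (le_div_iff₀ h2L).mp hμu
    linarith
  have hμL0 : 0 ≤ μ * L := by positivity
  have hμL1 : μ * L ≤ 1 / 2 := by nlinarith
  -- uniqueness
  have huniq : ∀ w : H, -A w ∈ B w → w = u := by
    intro w hw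
    have h1 := hBmono w u (-A w) (-A u) hw hu
    have h2 : (inner ℝ (-A w - -A u) (w - u) : ℝ) = -(inner ℝ (A w - A u) (w - u) : ℝ) := by
      rw [← inner_neg_left]; congr 1; abel
    rw [h2] at h1
    have h3 := hA w u
    have h4 : ‖w - u‖ ^ 2 ≤ 0 := by nlinarith
    have h5 : ‖w - u‖ = 0 := by nlinarith [norm_nonneg (w - u)]
    have := norm_eq_zero.mp h5
    rwa [sub_eq_zero] at this
  refine ⟨u, hu, huniq, ?_⟩
  -- Lyapunov function
  set Φ : ℕ → ℝ := fun n =>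
    ‖v n - u‖ ^ 2 - 2 * μ * (inner ℝ (A (v n) - A (v (n - 1))) (v n - u) : ℝ)
      + μ * L * ‖v n - v (n - 1)‖ ^ 2 with hΦdef
  -- key descent inequality
  have hkey : ∀ n : ℕ, 1 ≤ n →
      Φ (n + 1) + 2 * τ * μ * ‖v (n + 1) - u‖ ^ 2 ≤ Φ n := by
    intro n hn
    set p := v n with hp
    set q := v (n + 1) with hq
    set r := v (n - 1) with hr
    have hΦn1 : Φ (n + 1) =
        ‖q - u‖ ^ 2 - 2 * μ * (inner ℝ (A q - A p) (q - u) : ℝ) + μ * L * ‖q - p‖ ^ 2 := by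
      simp only [hΦdef, Nat.add_sub_cancel]; rfl
    have hΦn : Φ n =
        ‖p - u‖ ^ 2 - 2 * μ * (inner ℝ (A p - A r) (p - u) : ℝ) + μ * L * ‖p - r‖ ^ 2 := by
      simp only [hΦdef]; rfl
    rw [hΦn1, hΦn]
    -- monotonicity of B at the resolvent point
    have hmono := hBmono q u _ (-A u) (hres n hn) hu
    have hexp : (inner ℝ ((1 / μ) • (p - μ • ((2 : ℝ) • A p - A r) - q) - -A u) (q - u) : ℝ)
        = (1 / μ) * ((inner ℝ (p - q) (q - u) : ℝ)
            - μ * (2 * (inner ℝ (A p) (q - u) : ℝ) - (inner ℝ (A r) (q - u) : ℝ)))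
          + (inner ℝ (A u) (q - u) : ℝ) := by
      simp only [inner_sub_left, inner_add_left, inner_neg_left, real_inner_smul_left,
        inner_smul_left, RCLike.ofReal_real_eq_id, id_eq, conj_trivial]
      ring
    rw [hexp] at hmono
    have hμne : μ ≠ 0 := ne_of_gt hμ0
    have hcalc : μ * ((1 / μ) * ((inner ℝ (p - q) (q - u) : ℝ)
            - μ * (2 * (inner ℝ (A p) (q - u) : ℝ) - (inner ℝ (A r) (q - u) : ℝ)))
          + (inner ℝ (A u) (q - u) : ℝ))
        = (inner ℝ (p - q) (q - u) : ℝ)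
          + μ * ((inner ℝ (A u) (q - u) : ℝ) - 2 * (inner ℝ (A p) (q - u) : ℝ)
            + (inner ℝ (A r) (q - u) : ℝ)) := by
      field_simp
      ring
    have h1 : 0 ≤ (inner ℝ (p - q) (q - u) : ℝ)
        + μ * ((inner ℝ (A u) (q - u) : ℝ) - 2 * (inner ℝ (A p) (q - u) : ℝ)
            + (inner ℝ (A r) (q - u) : ℝ)) := by
      have h := mul_nonneg hμ0.le hmono
      rw [hcalc] at h
      exact h
    -- polarization
    have h2 : ‖p - u‖ ^ 2 = ‖p - q‖ ^ 2 + 2 * (inner ℝ (p - q) (q - u) : ℝ) + ‖q - u‖ ^ 2 := by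
      have := norm_add_sq_real (p - q) (q - u)
      have heq : p - q + (q - u) = p - u := by abel
      rw [heq] at this
      linarith
    -- strong monotonicity
    have h3 : τ * ‖q - u‖ ^ 2 ≤ (inner ℝ (A q - A u) (q - u) : ℝ) := hA q u
    -- Cauchy–Schwarz + Lipschitz
    have h5 : -( (μ * L / 2) * (‖p - r‖ ^ 2 + ‖q - p‖ ^ 2)) ≤
        μ * (inner ℝ (A p - A r) (q - p) : ℝ) ∧
        μ * (inner ℝ (A p - A r) (q - p) : ℝ) ≤
          (μ * L / 2) * (‖p - r‖ ^ 2 + ‖q - p‖ ^ 2) := by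
      have hcs := abs_real_inner_le_norm (A p - A r) (q - p)
      have hle : |(inner ℝ (A p - A r) (q - p) : ℝ)| ≤ L * ‖p - r‖ * ‖q - p‖ := by
        calc |(inner ℝ (A p - A r) (q - p) : ℝ)| ≤ ‖A p - A r‖ * ‖q - p‖ := hcs
          _ ≤ (L * ‖p - r‖) * ‖q - p‖ :=
            mul_le_mul_of_nonneg_right (hlip p r) (norm_nonneg _)
      have habs := abs_le.mp hle
      have hm1 := mul_le_mul_of_nonneg_left habs.1 hμ0.le
      have hm2 := mul_le_mul_of_nonneg_left habs.2 hμ0.le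
      have hamgm := mul_nonneg hμL0 (sq_nonneg (‖p - r‖ - ‖q - p‖))
      constructor
      · nlinarith [hm1, hamgm]
      · nlinarith [hm2, hamgm]
    obtain ⟨h5a, h5b⟩ := h5
    -- inner product decompositions
    have d1 : (inner ℝ (A u) (q - u) : ℝ) =
        (inner ℝ (A q) (q - u) : ℝ) - (inner ℝ (A q - A u) (q - u) : ℝ) := by
      rw [inner_sub_left]; ring
    have d2 : (inner ℝ (A r) (q - u) : ℝ) =
        (inner ℝ (A p) (q - u) : ℝ) - (inner ℝ (A p - A r) (q - u) : ℝ) := by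
      rw [inner_sub_left]; ring
    have d3 : (inner ℝ (A p - A r) (q - u) : ℝ) =
        (inner ℝ (A p - A r) (q - p) : ℝ) + (inner ℝ (A p - A r) (p - u) : ℝ) := by
      rw [← inner_add_right]; congr 1; abel
    have d4 : (inner ℝ (A q - A p) (q - u) : ℝ) =
        (inner ℝ (A q) (q - u) : ℝ) - (inner ℝ (A p) (q - u) : ℝ) := by
      rw [inner_sub_left]
    have hnrev : ‖p - q‖ = ‖q - p‖ := norm_sub_rev p q
    -- remaining positivity
    have hpos : 0 ≤ (1 - 2 * (μ * L)) * ‖q - p‖ ^ 2 := by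
      have : 0 ≤ 1 - 2 * (μ * L) := by linarith
      positivity
    have h3' : μ * τ * ‖q - u‖ ^ 2 ≤ μ * (inner ℝ (A q - A u) (q - u) : ℝ) := by
      have := mul_le_mul_of_nonneg_left h3 hμ0.le
      linarith [this]
    rw [d1, d2, d3] at h1
    rw [d4]
    have hnrev2 : ‖p - q‖ ^ 2 = ‖q - p‖ ^ 2 := by rw [hnrev]
    linarith [h1, h2, h3', h5a, hpos, hnrev2]
  -- nonnegativity of Φ
  have hΦnn : ∀ n : ℕ, 1 ≤ n → 0 ≤ Φ n := by
    intro n hn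
    set p := v n
    set r := v (n - 1)
    have hcs := abs_real_inner_le_norm (A p - A r) (p - u)
    have hle : |(inner ℝ (A p - A r) (p - u) : ℝ)| ≤ L * ‖p - r‖ * ‖p - u‖ := by
      calc |(inner ℝ (A p - A r) (p - u) : ℝ)| ≤ ‖A p - A r‖ * ‖p - u‖ := hcs
        _ ≤ (L * ‖p - r‖) * ‖p - u‖ :=
          mul_le_mul_of_nonneg_right (hlip p r) (norm_nonneg _)
    have habs := (abs_le.mp hle).2
    have hΦn : Φ n = ‖p - u‖ ^ 2 - 2 * μ * (inner ℝ (A p - A r) (p - u) : ℝ)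
        + μ * L * ‖p - r‖ ^ 2 := rfl
    rw [hΦn]
    have hm := mul_le_mul_of_nonneg_left habs (by positivity : (0:ℝ) ≤ 2 * μ)
    linarith [hm, mul_nonneg hμL0 (sq_nonneg (‖p - r‖ - ‖p - u‖)),
      mul_nonneg (by linarith : (0:ℝ) ≤ 1 - μ * L) (sq_nonneg ‖p - u‖)]
  -- telescoping
  have htel : ∀ N : ℕ,
      Φ (N + 1) + 2 * τ * μ * ∑ k ∈ Finset.range N, ‖v (k + 2) - u‖ ^ 2 ≤ Φ 1 := by
    intro N
    induction N with
    | zero => simp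
    | succ N ih =>
      have hk := hkey (N + 1) (by omega)
      rw [Finset.sum_range_succ]
      have : v (N + 1 + 1) = v (N + 2) := by norm_num
      rw [this] at hk
      linarith [hk, ih]
  -- summability
  have hsummable : Summable (fun k : ℕ => ‖v (k + 2) - u‖ ^ 2) := by
    apply summable_of_sum_range_le (c := Φ 1 / (2 * τ * μ))
    · intro n; positivity
    · intro N
      have h1 := htel N
      have h2 := hΦnn (N + 1) (by omega)
      rw [le_div_iff₀ (by positivity)]
      linarith
  have htend0 : Tendsto (fun k : ℕ => ‖v (k + 2) - u‖ ^ 2) atTop (nhds 0) :=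
    hsummable.tendsto_atTop_zero
  have htendsq : Tendsto (fun n : ℕ => ‖v n - u‖ ^ 2) atTop (nhds 0) :=
    (tendsto_add_atTop_iff_nat 2).mp htend0
  have htendnorm : Tendsto (fun n : ℕ => ‖v n - u‖) atTop (nhds 0) := by
    have hsqrt : Tendsto (fun n : ℕ => Real.sqrt (‖v n - u‖ ^ 2)) atTop (nhds (Real.sqrt 0)) :=
      (Real.continuous_sqrt.tendsto 0).comp htendsq
    rw [Real.sqrt_zero] at hsqrt
    convert hsqrt using 2 with n
    rw [Real.sqrt_sq (norm_nonneg _)]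
  rw [tendsto_iff_norm_sub_tendsto_zero]
  exact htendnorm
end
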